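/- Let q ≥ 2, let (C_G, w_G) be a polymer model on graph G satisfying the polymer sampling condition w_G(γ) ≤ e^{-τ·deg_G(V_γ)} with τ ≥ 3·log(8e³(q-1)). Then for every polymer γ ∈ C_G: ∑_{γ' incompatible with γ} |E_{γ'}| · w_G(γ') ≤ (1/e)·|E_γ|. -/

import Mathlib

set_option linter.unusedSectionVars false
set_option linter.unusedVariables false

open scoped Classical
open Finset

section Polymer
variable {V : Type*} [Fintype V] [DecidableEq V] (G : SimpleGraph V)

/-- Adjacency step inside a finset. -/
def pstep (s : Finset V) (x y : V) : Prop := G.Adj x y ∧ x ∈ s ∧ y ∈ s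

/-- Reachability inside a finset. -/
def preach (s : Finset V) (x y : V) : Prop := Relation.ReflTransGen (pstep G s) x y

/-- Connectivity of a finset (in the reach sense). -/
def pconn (s : Finset V) : Prop := ∀ a ∈ s, ∀ b ∈ s, preach G s a b

/-- Degree-sum of a vertex set. -/
noncomputable def pds (s : Finset V) : ℕ := ∑ v ∈ s, G.degree v

/-- Candidate polymer supports: connected sets containing `u` of size `≤ k`. -/
noncomputable def pcand (k : ℕ) (u : V) : Finset (Finset V) :=
  Finset.univ.filter (fun s => u ∈ s ∧ s.card ≤ k ∧ pconn G s)

/-- Component of `a` inside `s`. -/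
noncomputable def pcomp (s : Finset V) (a : V) : Finset V :=
  s.filter (fun b => preach G s a b)

variable {G}

lemma pstep_symm {s : Finset V} : Symmetric (pstep G s) := by
  intro x y ⟨h1, h2, h3⟩; exact ⟨h1.symm, h3, h2⟩

lemma preach_symm {s : Finset V} {a b : V} (h : preach G s a b) : preach G s b a :=
  by haveI : Std.Symm (pstep G s) := ⟨pstep_symm⟩; exact Relation.ReflTransGen.symmetric.symm _ _ h

lemma preach_trans {s : Finset V} {a b c : V} (h : preach G s a b) (h' : preach G s b c) :
    preach G s a c := Relation.ReflTransGen.trans h h'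

lemma mem_pcand {k : ℕ} {u : V} {s : Finset V} :
    s ∈ pcand G k u ↔ u ∈ s ∧ s.card ≤ k ∧ pconn G s := by
  simp [pcand]

lemma mem_pcomp {s : Finset V} {a b : V} : b ∈ pcomp G s a ↔ b ∈ s ∧ preach G s a b := by
  simp [pcomp]

lemma pcomp_subset {s : Finset V} {a : V} : pcomp G s a ⊆ s := filter_subset _ _

lemma preach_mono {s t : Finset V} (hst : s ⊆ t) {a b : V} (h : preach G s a b) :
    preach G t a b := by
  induction h with
  | refl => exact Relation.ReflTransGen.refl
  | tail _ h2 ih => exact ih.tail ⟨h2.1, hst h2.2.1, hst h2.2.2⟩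

/-- (L1) reachability inside `s` from `a` upgrades to reachability inside the component. -/
lemma preach_pcomp {s : Finset V} {a b : V} (ha : a ∈ s) (h : preach G s a b) :
    preach G (pcomp G s a) a b := by
  induction h with
  | refl => exact Relation.ReflTransGen.refl
  | @tail x y h1 h2 ih =>
      refine ih.tail ⟨h2.1, ?_, ?_⟩
      · exact mem_pcomp.2 ⟨h2.2.1, h1⟩
      · exact mem_pcomp.2 ⟨h2.2.2, h1.tail h2⟩

/-- (L3) equal components. -/
lemma pcomp_eq {s : Finset V} {a b : V} (h : preach G s a b) :
    pcomp G s a = pcomp G s b := by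
  ext c
  simp only [mem_pcomp]
  exact ⟨fun ⟨h1, h2⟩ => ⟨h1, preach_trans (preach_symm h) h2⟩,
    fun ⟨h1, h2⟩ => ⟨h1, preach_trans h h2⟩⟩

lemma pconn_pcomp {s : Finset V} {a : V} (ha : a ∈ s) : pconn G (pcomp G s a) := by
  intro b hb c hc
  rw [mem_pcomp] at hb hc
  exact preach_trans (preach_symm (preach_pcomp ha hb.2)) (preach_pcomp ha hc.2)

/-- (L2) every vertex of `s \ {u}` is reachable within `s \ {u}` from a neighbour of `u`. -/
lemma exists_nbr {s : Finset V} {u b : V} (h : preach G s u b) (hb : b ≠ u) :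
    ∃ a, G.Adj u a ∧ a ∈ s.erase u ∧ preach G (s.erase u) a b := by
  induction h with
  | refl => exact absurd rfl hb
  | @tail x y h1 h2 ih =>
      have hy : y ∈ s.erase u := Finset.mem_erase.2 ⟨hb, h2.2.2⟩
      by_cases hx : x = u
      · subst hx
        exact ⟨y, h2.1, hy, Relation.ReflTransGen.refl⟩
      · obtain ⟨a, haj, ham, har⟩ := ih hx
        exact ⟨a, haj, ham, har.tail ⟨h2.1, Finset.mem_erase.2 ⟨hx, h2.2.1⟩, hy⟩⟩

/-- (L0) induced connectivity implies `pconn`. -/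
lemma pconn_of_induce {s : Finset V} (h : (G.induce (s : Set V)).Connected) : pconn G s := by
  have key : ∀ (x y : ↑(s:Set V)), (G.induce (s:Set V)).Walk x y → preach G s x.1 y.1 := by
    intro x y wlk
    induction wlk with
    | nil => exact Relation.ReflTransGen.refl
    | @cons p q r hpq _ ih =>
        refine Relation.ReflTransGen.head ⟨hpq, ?_, ?_⟩ ih
        · exact Finset.mem_coe.1 p.2
        · exact Finset.mem_coe.1 q.2
  intro a ha b hb
  obtain ⟨wlk⟩ := h.preconnected ⟨a, Finset.mem_coe.2 ha⟩ ⟨b, Finset.mem_coe.2 hb⟩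
  exact key _ _ wlk

end Polymer
section Decomp
variable {V : Type*} [Fintype V] [DecidableEq V] [LinearOrder V] (G : SimpleGraph V)

/-- The canonical decomposition of a connected set `S ∋ u` into components of `S \ {u}`,
indexed by neighbours of `u` (the component is attached to its least neighbour of `u`). -/
noncomputable def Phi (u : V) (S : Finset V) (a : ↥(G.neighborFinset u)) : Finset V :=
  if a.1 ∈ S.erase u ∧ ∀ b ∈ G.neighborFinset u, b ∈ pcomp G (S.erase u) a.1 → a.1 ≤ b
  then pcomp G (S.erase u) a.1 else ∅

variable {G}

lemma Phi_subset {u : V} {S : Finset V} (a : ↥(G.neighborFinset u)) :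
    Phi G u S a ⊆ S.erase u := by
  unfold Phi
  split
  · exact pcomp_subset
  · exact Finset.empty_subset _

lemma mem_Phi_iff {u : V} {S : Finset V} (hu : u ∈ S) (hconn : pconn G S) (b : V) :
    (∃ a : ↥(G.neighborFinset u), b ∈ Phi G u S a) ↔ b ∈ S.erase u := by
  constructor
  · rintro ⟨a, hb⟩
    exact Phi_subset a hb
  · intro hb
    obtain ⟨a0, haj, ha0, hr⟩ :=
      exists_nbr (hconn u hu b (Finset.mem_of_mem_erase hb)) (Finset.mem_erase.1 hb).1
    set s' := S.erase u with hs'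
    set T := (G.neighborFinset u).filter (fun x => x ∈ pcomp G s' a0) with hT
    have hTne : T.Nonempty := by
      refine ⟨a0, Finset.mem_filter.2 ⟨(G.mem_neighborFinset u a0).2 haj, ?_⟩⟩
      exact mem_pcomp.2 ⟨ha0, Relation.ReflTransGen.refl⟩
    set m := T.min' hTne with hmdef
    have hm := T.min'_mem hTne
    rw [Finset.mem_filter] at hm
    have hmreach : preach G s' a0 m := (mem_pcomp.1 hm.2).2
    have hcompeq : pcomp G s' m = pcomp G s' a0 := (pcomp_eq hmreach).symm
    refine ⟨⟨m, hm.1⟩, ?_⟩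
    unfold Phi
    rw [if_pos]
    · rw [hcompeq]
      exact mem_pcomp.2 ⟨hb, hr⟩
    · constructor
      · exact pcomp_subset hm.2
      · intro b' hb'N hb'c
        rw [hcompeq] at hb'c
        exact T.min'_le b' (Finset.mem_filter.2 ⟨hb'N, hb'c⟩)

lemma Phi_disjoint {u : V} {S : Finset V} {a a' : ↥(G.neighborFinset u)} (hne : a ≠ a') :
    Disjoint (Phi G u S a) (Phi G u S a') := by
  by_contra hdisj
  obtain ⟨b, hb1, hb2⟩ := Finset.not_disjoint_iff.1 hdisj
  unfold Phi at hb1 hb2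
  by_cases h1 : a.1 ∈ S.erase u ∧ ∀ b ∈ G.neighborFinset u,
      b ∈ pcomp G (S.erase u) a.1 → a.1 ≤ b
  swap
  · rw [if_neg h1] at hb1; exact absurd hb1 (Finset.notMem_empty b)
  by_cases h2 : a'.1 ∈ S.erase u ∧ ∀ b ∈ G.neighborFinset u,
      b ∈ pcomp G (S.erase u) a'.1 → a'.1 ≤ b
  swap
  · rw [if_neg h2] at hb2; exact absurd hb2 (Finset.notMem_empty b)
  rw [if_pos h1] at hb1
  rw [if_pos h2] at hb2
  have heq : pcomp G (S.erase u) a.1 = pcomp G (S.erase u) a'.1 :=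
    (pcomp_eq (mem_pcomp.1 hb1).2).trans (pcomp_eq (mem_pcomp.1 hb2).2).symm
  have hle : a.1 ≤ a'.1 := by
    refine h1.2 a'.1 a'.2 ?_
    rw [heq]
    exact mem_pcomp.2 ⟨h2.1, Relation.ReflTransGen.refl⟩
  have hle' : a'.1 ≤ a.1 := by
    refine h2.2 a.1 a.2 ?_
    rw [← heq]
    exact mem_pcomp.2 ⟨h1.1, Relation.ReflTransGen.refl⟩
  exact hne (Subtype.ext (le_antisymm hle hle'))

lemma Phi_mem {u : V} {S : Finset V} {k : ℕ} (hu : u ∈ S) (hcard : S.card ≤ k + 1)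
    (a : ↥(G.neighborFinset u)) : Phi G u S a ∈ insert ∅ (pcand G k a.1) := by
  unfold Phi
  split
  case isFalse => exact Finset.mem_insert_self _ _
  case isTrue h =>
    refine Finset.mem_insert_of_mem (mem_pcand.2 ⟨?_, ?_, ?_⟩)
    · exact mem_pcomp.2 ⟨h.1, Relation.ReflTransGen.refl⟩
    · calc (pcomp G (S.erase u) a.1).card ≤ (S.erase u).card :=
            Finset.card_le_card pcomp_subset
        _ = S.card - 1 := Finset.card_erase_of_mem hu
        _ ≤ k := by omega
    · exact pconn_pcomp h.1

lemma Phi_biUnion {u : V} {S : Finset V} (hu : u ∈ S) (hconn : pconn G S) :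
    Finset.univ.biUnion (fun a : ↥(G.neighborFinset u) => Phi G u S a) = S.erase u := by
  ext b
  rw [Finset.mem_biUnion]
  constructor
  · rintro ⟨a, _, hb⟩; exact Phi_subset a hb
  · intro hb
    obtain ⟨a, ha⟩ := (mem_Phi_iff hu hconn b).2 hb
    exact ⟨a, Finset.mem_univ a, ha⟩

end Decomp
section ZB
variable {V : Type*} [Fintype V] [DecidableEq V] [LinearOrder V] {G : SimpleGraph V}

lemma degree_pos_of_mem_nbr {u a : V} (ha : a ∈ G.neighborFinset u) : 1 ≤ G.degree a := by
  rw [← SimpleGraph.card_neighborFinset_eq_degree]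
  refine Finset.card_pos.2 ⟨u, ?_⟩
  rw [SimpleGraph.mem_neighborFinset] at ha ⊢
  exact ha.symm

lemma Zbound (r z : ℝ) (hr : 1 ≤ r) (hz : 0 < z) (hc : Real.exp 1 * r * z ≤ 1) (k : ℕ) :
    ∀ u : V, 1 ≤ G.degree u →
      ∑ S ∈ pcand G k u, r ^ S.card * z ^ pds G S ≤ (Real.exp 1 * r * z) ^ G.degree u := by
  have hc0 : 0 ≤ Real.exp 1 * r * z := by positivity
  induction k with
  | zero =>
      intro u hdu
      have : pcand G 0 u = ∅ := by
        ext s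
        simp only [mem_pcand, Finset.notMem_empty, iff_false]
        rintro ⟨hus, hcard, -⟩
        rw [Nat.le_zero, Finset.card_eq_zero] at hcard
        subst hcard
        exact absurd hus (Finset.notMem_empty u)
      rw [this, Finset.sum_empty]
      positivity
  | succ k ih =>
      intro u hdu
      set F : Finset V → ℝ := fun s => r ^ s.card * z ^ pds G s with hF
      have hF0 : ∀ s, 0 ≤ F s := fun s => by positivity
      have hFempty : F ∅ = 1 := by simp [hF, pds]
      -- multiplicativity
      have step1 : ∀ S ∈ pcand G (k + 1) u,
          F S = (r * z ^ G.degree u) * ∏ a : ↥(G.neighborFinset u), F (Phi G u S a) := by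
        intro S hS
        obtain ⟨hu, hcard, hconn⟩ := mem_pcand.1 hS
        have hdisj : Set.PairwiseDisjoint
            (↑(Finset.univ : Finset ↥(G.neighborFinset u)))
            (fun a => Phi G u S a) := fun x _ y _ hxy => Phi_disjoint hxy
        have hbU := Phi_biUnion hu hconn
        have hcardeq : S.card = 1 + ∑ a : ↥(G.neighborFinset u), (Phi G u S a).card := by
          have h1 : (S.erase u).card = ∑ a : ↥(G.neighborFinset u), (Phi G u S a).card := by
            rw [← hbU]
            exact Finset.card_biUnion (fun x _ y _ hxy => Phi_disjoint hxy)
          have h2 := Finset.card_erase_add_one hu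
          omega
        have hdseq : pds G S = G.degree u + ∑ a : ↥(G.neighborFinset u), pds G (Phi G u S a) := by
          have h1 : pds G (S.erase u) = ∑ a : ↥(G.neighborFinset u), pds G (Phi G u S a) := by
            rw [pds, ← hbU, Finset.sum_biUnion hdisj]
            rfl
          have h2 : G.degree u + pds G (S.erase u) = pds G S := by
            rw [pds, pds]
            exact Finset.add_sum_erase S (G.degree ·) hu
          omega
        rw [hF]
        simp only
        rw [hcardeq, hdseq, pow_add, pow_add, pow_one]
        rw [← Finset.prod_pow_eq_pow_sum, ← Finset.prod_pow_eq_pow_sum,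
          Finset.prod_mul_distrib]
        ring
      -- injectivity
      have hinj : Set.InjOn (Phi G u) ↑(pcand G (k + 1) u) := by
        intro S hS S' hS' heq
        obtain ⟨hu, _, hconn⟩ := mem_pcand.1 (Finset.mem_coe.1 hS)
        obtain ⟨hu', _, hconn'⟩ := mem_pcand.1 (Finset.mem_coe.1 hS')
        have h1 := Phi_biUnion hu hconn
        have h2 := Phi_biUnion hu' hconn'
        rw [heq] at h1
        have : S.erase u = S'.erase u := h1 ▸ h2 ▸ rfl
        calc S = insert u (S.erase u) := (Finset.insert_erase hu).symm
          _ = insert u (S'.erase u) := by rw [this]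
          _ = S' := Finset.insert_erase hu'
      calc ∑ S ∈ pcand G (k + 1) u, F S
          = ∑ S ∈ pcand G (k + 1) u,
              (r * z ^ G.degree u) * ∏ a : ↥(G.neighborFinset u), F (Phi G u S a) :=
            Finset.sum_congr rfl step1
        _ = (r * z ^ G.degree u) * ∑ S ∈ pcand G (k + 1) u,
              ∏ a : ↥(G.neighborFinset u), F (Phi G u S a) := by rw [Finset.mul_sum]
        _ = (r * z ^ G.degree u) * ∑ p ∈ (pcand G (k + 1) u).image (Phi G u),
              ∏ a : ↥(G.neighborFinset u), F (p a) := by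
            rw [Finset.sum_image (fun x hx y hy h => hinj (Finset.mem_coe.2 hx)
              (Finset.mem_coe.2 hy) h)]
        _ ≤ (r * z ^ G.degree u) * ∑ p ∈ Fintype.piFinset
              (fun a : ↥(G.neighborFinset u) => insert ∅ (pcand G k a.1)),
              ∏ a : ↥(G.neighborFinset u), F (p a) := by
            refine mul_le_mul_of_nonneg_left ?_ (by positivity)
            refine Finset.sum_le_sum_of_subset_of_nonneg ?_
              (fun p _ _ => Finset.prod_nonneg (fun a _ => hF0 _))
            intro p hp
            obtain ⟨S, hS, rfl⟩ := Finset.mem_image.1 hp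
            obtain ⟨hu, hcard, _⟩ := mem_pcand.1 hS
            exact Fintype.mem_piFinset.2 (fun a => Phi_mem hu hcard a)
        _ = (r * z ^ G.degree u) * ∏ a : ↥(G.neighborFinset u),
              ∑ s ∈ insert ∅ (pcand G k a.1), F s := by
            rw [Finset.prod_univ_sum]
        _ ≤ (r * z ^ G.degree u) * ∏ a : ↥(G.neighborFinset u), Real.exp 1 := by
            refine mul_le_mul_of_nonneg_left ?_ (by positivity)
            refine Finset.prod_le_prod (fun a _ => Finset.sum_nonneg fun s _ => hF0 s) ?_
            intro a _
            have hne : (∅ : Finset V) ∉ pcand G k a.1 := by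
              rw [mem_pcand]
              rintro ⟨h, -, -⟩
              exact absurd h (Finset.notMem_empty _)
            rw [Finset.sum_insert hne, hFempty]
            have hZ : ∑ s ∈ pcand G k a.1, F s ≤ (Real.exp 1 * r * z) ^ G.degree a.1 :=
              ih a.1 (degree_pos_of_mem_nbr a.2)
            have hZc : (Real.exp 1 * r * z) ^ G.degree a.1 ≤ Real.exp 1 * r * z := by
              calc (Real.exp 1 * r * z) ^ G.degree a.1 ≤ (Real.exp 1 * r * z) ^ 1 :=
                  pow_le_pow_of_le_one hc0 hc (degree_pos_of_mem_nbr a.2)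
                _ = Real.exp 1 * r * z := pow_one _
            calc 1 + ∑ s ∈ pcand G k a.1, F s ≤ 1 + Real.exp 1 * r * z :=
                by linarith [hZ.trans hZc]
              _ ≤ Real.exp (Real.exp 1 * r * z) := by
                  linarith [Real.add_one_le_exp (Real.exp 1 * r * z)]
              _ ≤ Real.exp 1 := Real.exp_le_exp.2 hc
        _ = (r * z ^ G.degree u) * Real.exp 1 ^ G.degree u := by
            rw [Finset.prod_const, Finset.card_univ, Fintype.card_coe,
              SimpleGraph.card_neighborFinset_eq_degree]
        _ ≤ (Real.exp 1 * r * z) ^ G.degree u := by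
            rw [mul_pow, mul_pow]
            have h1 : r ≤ r ^ G.degree u := le_self_pow₀ hr (by omega)
            have h2 : (0:ℝ) ≤ Real.exp 1 ^ G.degree u := by positivity
            have h3 : (0:ℝ) ≤ z ^ G.degree u := by positivity
            calc r * z ^ G.degree u * Real.exp 1 ^ G.degree u
                ≤ r ^ G.degree u * z ^ G.degree u * Real.exp 1 ^ G.degree u := by
                  apply mul_le_mul_of_nonneg_right _ h2
                  exact mul_le_mul_of_nonneg_right h1 h3
              _ = Real.exp 1 ^ G.degree u * r ^ G.degree u * z ^ G.degree u := by ring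

end ZB
section Edges
variable {V : Type*} [Fintype V] [DecidableEq V] {G : SimpleGraph V}

lemma edge_filter_le_pds (S : Finset V) :
    (G.edgeFinset.filter (fun e => ∃ v ∈ S, v ∈ e)).card ≤ pds G S := by
  have hsub : G.edgeFinset.filter (fun e => ∃ v ∈ S, v ∈ e) ⊆
      S.biUnion (fun v => G.incidenceFinset v) := by
    intro e he
    rw [Finset.mem_filter] at he
    obtain ⟨heE, v, hvS, hve⟩ := he
    refine Finset.mem_biUnion.2 ⟨v, hvS, ?_⟩
    rw [SimpleGraph.mem_incidenceFinset]
    exact ⟨SimpleGraph.mem_edgeFinset.1 heE, hve⟩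
  calc (G.edgeFinset.filter (fun e => ∃ v ∈ S, v ∈ e)).card
      ≤ (S.biUnion (fun v => G.incidenceFinset v)).card := Finset.card_le_card hsub
    _ ≤ ∑ v ∈ S, (G.incidenceFinset v).card := Finset.card_biUnion_le
    _ = pds G S := Finset.sum_congr rfl
        (fun v _ => G.card_incidenceFinset_eq_degree v)

lemma pds_le_two_edge (S : Finset V) :
    pds G S ≤ 2 * (G.edgeFinset.filter (fun e => ∃ v ∈ S, v ∈ e)).card := by
  set ES := G.edgeFinset.filter (fun e => ∃ v ∈ S, v ∈ e) with hES
  have hsub : ∀ v ∈ S, G.incidenceFinset v ⊆ ES := by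
    intro v hv e he
    rw [SimpleGraph.mem_incidenceFinset] at he
    exact Finset.mem_filter.2 ⟨SimpleGraph.mem_edgeFinset.2 he.1, v, hv, he.2⟩
  have h1 : pds G S = ∑ v ∈ S, (ES.filter (fun e => e ∈ G.incidenceFinset v)).card := by
    refine Finset.sum_congr rfl (fun v hv => ?_)
    rw [← G.card_incidenceFinset_eq_degree v]
    congr 1
    ext e
    simp only [Finset.mem_filter]
    exact ⟨fun h => ⟨hsub v hv h, h⟩, fun h => h.2⟩
  rw [h1]
  have h2 : ∀ v ∈ S, (ES.filter (fun e => e ∈ G.incidenceFinset v)).card =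
      ∑ e ∈ ES, (if e ∈ G.incidenceFinset v then 1 else 0) := by
    intro v _
    exact Finset.card_filter _ _
  calc ∑ v ∈ S, (ES.filter (fun e => e ∈ G.incidenceFinset v)).card
      = ∑ v ∈ S, ∑ e ∈ ES, (if e ∈ G.incidenceFinset v then 1 else 0) :=
        Finset.sum_congr rfl h2
    _ = ∑ e ∈ ES, ∑ v ∈ S, (if e ∈ G.incidenceFinset v then 1 else 0) := Finset.sum_comm
    _ ≤ ∑ e ∈ ES, 2 := by
        refine Finset.sum_le_sum (fun e he => ?_)
        rw [← Finset.card_filter]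
        induction e with
        | h x y =>
          have hsub2 : S.filter (fun v => s(x, y) ∈ G.incidenceFinset v) ⊆ {x, y} := by
            intro v hv
            rw [Finset.mem_filter, SimpleGraph.mem_incidenceFinset] at hv
            have := hv.2.2
            rw [Sym2.mem_iff] at this
            simp only [Finset.mem_insert, Finset.mem_singleton]
            exact this
          calc (S.filter (fun v => s(x, y) ∈ G.incidenceFinset v)).card
              ≤ ({x, y} : Finset V).card := Finset.card_le_card hsub2
            _ ≤ 2 := Finset.card_insert_le x {y} |>.trans (by simp)
    _ = 2 * ES.card := by rw [Finset.sum_const, smul_eq_mul, mul_comm]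

lemma pconn_singleton_of_deg_zero {s : Finset V} {u : V} (hconn : pconn G s) (hu : u ∈ s)
    (hd : G.degree u = 0) : s = {u} := by
  have claim : ∀ v, preach G s u v → v = u := by
    intro v h
    induction h with
    | refl => rfl
    | @tail x y h1 h2 ih =>
        exfalso
        have hx := ih
        subst hx
        have : y ∈ G.neighborFinset x := (G.mem_neighborFinset x y).2 h2.1
        have hpos : 0 < (G.neighborFinset x).card := Finset.card_pos.2 ⟨y, this⟩
        rw [G.card_neighborFinset_eq_degree, hd] at hpos
        exact absurd hpos (lt_irrefl 0)
  ext v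
  simp only [Finset.mem_singleton]
  constructor
  · intro hv; exact claim v (hconn u hu v hv)
  · intro hv; subst hv; exact hu

lemma sum_le_cover {α β : Type*} (s : Finset α) (t : Finset β) (P : β → α → Prop)
    (f : α → ℝ) (hf : ∀ x ∈ s, 0 ≤ f x) (hcov : ∀ x ∈ s, ∃ y ∈ t, P y x) :
    ∑ x ∈ s, f x ≤ ∑ y ∈ t, ∑ x ∈ s.filter (fun x => P y x), f x := by
  classical
  have : ∀ y, ∑ x ∈ s.filter (fun x => P y x), f x =
      ∑ x ∈ s, (if P y x then f x else 0) := fun y => (Finset.sum_filter _ _)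
  simp only [this]
  rw [Finset.sum_comm]
  refine Finset.sum_le_sum (fun x hx => ?_)
  obtain ⟨y0, hy0, hP⟩ := hcov x hx
  calc f x = (if P y0 x then f x else 0) := by rw [if_pos hP]
    _ ≤ ∑ y ∈ t, (if P y x then f x else 0) := by
        refine Finset.single_le_sum (f := fun y => if P y x then f x else 0)
          (fun y _ => ?_) hy0
        by_cases h : P y x
        · rw [if_pos h]; exact hf x hx
        · rw [if_neg h]


lemma fiber_card_le {q : ℕ} (hq : 2 ≤ q) (g : V → Fin q)
    (C : Finset (Finset V × (V → Fin q)))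
    (hvalid : ∀ γ ∈ C, (∀ v ∈ γ.1, γ.2 v ≠ g v) ∧ (∀ v ∉ γ.1, γ.2 v = g v))
    (S : Finset V) :
    (C.filter (fun γ' => γ'.1 = S)).card ≤ (q - 1) ^ S.card := by
  classical
  have hcard : (Fintype.piFinset (fun v : ↥S => Finset.univ.erase (g v.1))).card =
      (q - 1) ^ S.card := by
    rw [Fintype.card_piFinset]
    have : ∀ v : ↥S, (Finset.univ.erase (g v.1)).card = q - 1 := by
      intro v
      rw [Finset.card_erase_of_mem (Finset.mem_univ _), Finset.card_univ, Fintype.card_fin]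
    rw [Finset.prod_congr rfl (fun v _ => this v), Finset.prod_const, Finset.card_univ,
      Fintype.card_coe]
  rw [← hcard]
  refine Finset.card_le_card_of_injOn (fun γ' (v : ↥S) => γ'.2 v.1) ?_ ?_
  · intro γ' hγ'
    rw [Finset.mem_coe, Finset.mem_filter] at hγ'
    refine Fintype.mem_piFinset.2 (fun v => ?_)
    refine Finset.mem_erase.2 ⟨?_, Finset.mem_univ _⟩
    exact (hvalid γ' hγ'.1).1 v.1 (hγ'.2 ▸ v.2)
  · intro γ1 h1 γ2 h2 heq
    rw [Finset.mem_coe, Finset.mem_filter] at h1 h2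
    have hfst : γ1.1 = γ2.1 := h1.2.trans h2.2.symm
    have hsnd : γ1.2 = γ2.2 := by
      funext v
      by_cases hv : v ∈ S
      · exact congrFun heq ⟨v, hv⟩
      · rw [(hvalid γ1 h1.1).2 v (h1.2 ▸ hv), (hvalid γ2 h2.1).2 v (h2.2 ▸ hv)]
    exact Prod.ext hfst hsnd

end Edges
set_option maxHeartbeats 1000000 in
theorem polymer_sampling_implies_mixing
    {V : Type*} [Fintype V] [DecidableEq V] (G : SimpleGraph V)
    (q : ℕ) (hq : 2 ≤ q) (g : V → Fin q)
    (C : Finset (Finset V × (V → Fin q)))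
    (hvalid : ∀ γ ∈ C, γ.1.Nonempty ∧ (G.induce (γ.1 : Set V)).Connected ∧
      (∀ v ∈ γ.1, γ.2 v ≠ g v) ∧ (∀ v ∉ γ.1, γ.2 v = g v))
    (w : Finset V × (V → Fin q) → ℝ)
    (hw0 : ∀ γ ∈ C, 0 ≤ w γ)
    (τ : ℝ) (hτ : 3 * Real.log (8 * Real.exp 3 * ((q : ℝ) - 1)) ≤ τ)
    (hsamp : ∀ γ ∈ C, w γ ≤ Real.exp (-τ * (∑ v ∈ γ.1, G.degree v : ℝ))) :
    ∀ γ ∈ C,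
      ∑ γ' ∈ C.filter (fun γ' => ∃ u ∈ γ.1, ∃ u' ∈ γ'.1, u = u' ∨ G.Adj u u'),
          ((G.edgeFinset.filter (fun e => ∃ v ∈ γ'.1, v ∈ e)).card : ℝ) * w γ'
        ≤ (1 / Real.exp 1) *
          ((G.edgeFinset.filter (fun e => ∃ v ∈ γ.1, v ∈ e)).card : ℝ) := by
  letI : LinearOrder V := LinearOrder.lift' (fun v => (Fintype.equivFin V v : ℕ))
    (fun a b h => (Fintype.equivFin V).injective (Fin.val_injective h))
  intro γ hγ
  by_cases hdeg : ∀ u ∈ γ.1, 1 ≤ G.degree u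
  swap
  -- DEGENERATE CASE: some vertex of γ has degree zero
  · push_neg at hdeg
    obtain ⟨u, huA, hdu⟩ := hdeg
    have hdu0 : G.degree u = 0 := by omega
    have hA : γ.1 = {u} :=
      pconn_singleton_of_deg_zero (pconn_of_induce (hvalid γ hγ).2.1) huA hdu0
    have hnoedge : ∀ T : Finset V, T = {u} →
        G.edgeFinset.filter (fun e => ∃ v ∈ T, v ∈ e) = ∅ := by
      intro T hT
      subst hT
      ext e
      simp only [Finset.mem_filter, Finset.notMem_empty, iff_false, not_and,
        Finset.mem_singleton]
      intro heE
      rintro ⟨v, rfl, hue⟩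
      have hinc : e ∈ G.incidenceFinset v :=
        (SimpleGraph.mem_incidenceFinset G v e).2 ⟨SimpleGraph.mem_edgeFinset.1 heE, hue⟩
      have hpos : 0 < (G.incidenceFinset v).card := Finset.card_pos.2 ⟨e, hinc⟩
      rw [G.card_incidenceFinset_eq_degree, hdu0] at hpos
      exact absurd hpos (lt_irrefl 0)
    have hLHS : ∑ γ' ∈ C.filter (fun γ' => ∃ u ∈ γ.1, ∃ u' ∈ γ'.1, u = u' ∨ G.Adj u u'),
        ((G.edgeFinset.filter (fun e => ∃ v ∈ γ'.1, v ∈ e)).card : ℝ) * w γ' = 0 := by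
      refine Finset.sum_eq_zero (fun γ' hγ' => ?_)
      rw [Finset.mem_filter] at hγ'
      obtain ⟨hγC', u0, hu0, u', hu', hor⟩ := hγ'
      rw [hA, Finset.mem_singleton] at hu0
      subst hu0
      have huin : u0 ∈ γ'.1 := by
        rcases hor with h | h
        · exact h ▸ hu'
        · exfalso
          have : u' ∈ G.neighborFinset u0 := (G.mem_neighborFinset u0 u').2 h
          have hpos : 0 < (G.neighborFinset u0).card := Finset.card_pos.2 ⟨u', this⟩
          rw [G.card_neighborFinset_eq_degree, hdu0] at hpos
          exact absurd hpos (lt_irrefl 0)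
      have hA' : γ'.1 = {u0} :=
        pconn_singleton_of_deg_zero (pconn_of_induce (hvalid γ' hγC').2.1) huin hdu0
      rw [hnoedge γ'.1 hA', Finset.card_empty, Nat.cast_zero, zero_mul]
    rw [hLHS, hnoedge γ.1 hA, Finset.card_empty, Nat.cast_zero, mul_zero]
  -- MAIN CASE: all vertices of γ have positive degree
  · have hr : (1:ℝ) ≤ (q:ℝ) - 1 := by
      have : (2:ℝ) ≤ (q:ℝ) := by exact_mod_cast hq
      linarith
    set r : ℝ := (q:ℝ) - 1 with hrdef
    have hr0 : (0:ℝ) < r := by linarith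
    set z : ℝ := Real.exp (1 - τ) with hzdef
    have hz : 0 < z := Real.exp_pos _
    have hc0 : (0:ℝ) ≤ Real.exp 1 * r * z := by positivity
    have hτ3 : Real.log 4 + Real.log r + 3 ≤ τ := by
      have h8 : Real.log (8 * Real.exp 3 * r) = Real.log 8 + 3 + Real.log r := by
        rw [Real.log_mul (by positivity) (ne_of_gt hr0),
          Real.log_mul (by norm_num) (Real.exp_ne_zero 3), Real.log_exp]
      rw [h8] at hτ
      have hlr : 0 ≤ Real.log r := Real.log_nonneg hr
      have hl8 : Real.log 4 ≤ Real.log 8 := Real.log_le_log (by norm_num) (by norm_num)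
      have hl4 : Real.log 4 ≤ 3 := by
        have := Real.log_le_sub_one_of_pos (x := 4) (by norm_num); linarith
      have hl40 : 0 ≤ Real.log 4 := Real.log_nonneg (by norm_num)
      linarith
    have hkey : 4 * Real.exp 1 * (Real.exp 1 * r * z) ≤ 1 := by
      have e1 : 4 * Real.exp 1 * (Real.exp 1 * r * z) =
          Real.exp (Real.log 4 + Real.log r + 3 - τ) := by
        rw [hzdef, show Real.log 4 + Real.log r + 3 - τ =
          Real.log 4 + (Real.log r + (1 + (1 + (1 - τ)))) from by ring]
        rw [Real.exp_add, Real.exp_add, Real.exp_add, Real.exp_add,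
          Real.exp_log (by norm_num : (0:ℝ) < 4), Real.exp_log hr0]
        ring
      rw [e1, show (1:ℝ) = Real.exp 0 from Real.exp_zero.symm]
      exact Real.exp_le_exp.2 (by linarith)
    have hexp1 : (1:ℝ) ≤ Real.exp 1 := by
      have := Real.add_one_le_exp 1; linarith
    have hcquarter : Real.exp 1 * r * z ≤ 1 / (4 * Real.exp 1) := by
      rw [le_div_iff₀ (by positivity)]
      nlinarith [hkey]
    have hc1 : Real.exp 1 * r * z ≤ 1 := by
      have h2 : (1:ℝ) / (4 * Real.exp 1) ≤ 1 := by
        rw [div_le_one (by positivity)]; linarith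
      exact hcquarter.trans h2
    -- the distance-1 ball of γ
    set B : Finset V := γ.1.biUnion (fun u => insert u (G.neighborFinset u)) with hBdef
    have hBdeg : ∀ u' ∈ B, 1 ≤ G.degree u' := by
      intro u' hu'
      rw [hBdef, Finset.mem_biUnion] at hu'
      obtain ⟨u, huA, hmem⟩ := hu'
      rcases Finset.mem_insert.1 hmem with h | h
      · exact h ▸ hdeg u huA
      · exact degree_pos_of_mem_nbr h
    -- per-vertex bound
    have hper : ∀ u' : V, 1 ≤ G.degree u' →
        ∑ γ' ∈ C.filter (fun γ' => u' ∈ γ'.1),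
          ((G.edgeFinset.filter (fun e => ∃ v ∈ γ'.1, v ∈ e)).card : ℝ) * w γ'
          ≤ Real.exp 1 * r * z := by
      intro u' hdu'
      have hmaps : ∀ γ' ∈ C.filter (fun γ' => u' ∈ γ'.1),
          γ'.1 ∈ pcand G (Fintype.card V) u' := by
        intro γ' hγ'
        rw [Finset.mem_filter] at hγ'
        refine mem_pcand.2 ⟨hγ'.2, ?_, pconn_of_induce (hvalid γ' hγ'.1).2.1⟩
        calc γ'.1.card ≤ (Finset.univ : Finset V).card := Finset.card_le_univ _
          _ = Fintype.card V := Finset.card_univ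
      rw [← Finset.sum_fiberwise_of_maps_to hmaps]
      have hinner : ∀ S ∈ pcand G (Fintype.card V) u',
          ∑ γ' ∈ (C.filter (fun γ' => u' ∈ γ'.1)).filter (fun γ' => γ'.1 = S),
            ((G.edgeFinset.filter (fun e => ∃ v ∈ γ'.1, v ∈ e)).card : ℝ) * w γ'
          ≤ r ^ S.card * z ^ pds G S := by
        intro S _
        have hterm : ∀ γ' ∈ (C.filter (fun γ' => u' ∈ γ'.1)).filter (fun γ' => γ'.1 = S),
            ((G.edgeFinset.filter (fun e => ∃ v ∈ γ'.1, v ∈ e)).card : ℝ) * w γ'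
            ≤ (pds G S : ℝ) * Real.exp (-τ * (pds G S : ℝ)) := by
          intro γ' hγ'
          rw [Finset.mem_filter, Finset.mem_filter] at hγ'
          obtain ⟨⟨hγC', _⟩, hfib⟩ := hγ'
          have h1 : ((G.edgeFinset.filter (fun e => ∃ v ∈ γ'.1, v ∈ e)).card : ℝ)
              ≤ (pds G S : ℝ) := by
            rw [hfib]
            exact_mod_cast edge_filter_le_pds S
          have h2 : w γ' ≤ Real.exp (-τ * (pds G S : ℝ)) := by
            have hw := hsamp γ' hγC'
            have hcast : (∑ v ∈ γ'.1, G.degree v : ℝ) = (pds G S : ℝ) := by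
              rw [pds, ← hfib]
              push_cast
              rfl
            rwa [hcast] at hw
          have hw0' := hw0 γ' hγC'
          exact mul_le_mul h1 h2 hw0' (by positivity)
        calc ∑ γ' ∈ (C.filter (fun γ' => u' ∈ γ'.1)).filter (fun γ' => γ'.1 = S),
              ((G.edgeFinset.filter (fun e => ∃ v ∈ γ'.1, v ∈ e)).card : ℝ) * w γ'
            ≤ ∑ _γ' ∈ (C.filter (fun γ' => u' ∈ γ'.1)).filter (fun γ' => γ'.1 = S),
              (pds G S : ℝ) * Real.exp (-τ * (pds G S : ℝ)) := Finset.sum_le_sum hterm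
          _ = (((C.filter (fun γ' => u' ∈ γ'.1)).filter (fun γ' => γ'.1 = S)).card : ℝ) *
              ((pds G S : ℝ) * Real.exp (-τ * (pds G S : ℝ))) := by
              rw [Finset.sum_const, nsmul_eq_mul]
          _ ≤ (((q - 1) ^ S.card : ℕ) : ℝ) *
              ((pds G S : ℝ) * Real.exp (-τ * (pds G S : ℝ))) := by
              refine mul_le_mul_of_nonneg_right ?_ (by positivity)
              have hsub : (C.filter (fun γ' => u' ∈ γ'.1)).filter (fun γ' => γ'.1 = S)
                  ⊆ C.filter (fun γ' => γ'.1 = S) := by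
                intro x hx
                rw [Finset.mem_filter, Finset.mem_filter] at hx
                exact Finset.mem_filter.2 ⟨hx.1.1, hx.2⟩
              have hcard := (Finset.card_le_card hsub).trans
                (fiber_card_le hq g C (fun γ'' hγ'' => (hvalid γ'' hγ'').2.2) S)
              exact_mod_cast hcard
          _ ≤ r ^ S.card * z ^ pds G S := by
              have hq1 : (((q - 1) ^ S.card : ℕ) : ℝ) = r ^ S.card := by
                rw [hrdef]
                push_cast [Nat.cast_sub (by omega : 1 ≤ q)]
                ring
              rw [hq1]
              refine mul_le_mul_of_nonneg_left ?_ (by positivity)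
              rw [hzdef, ← Real.exp_nat_mul]
              have hsplit : Real.exp ((pds G S : ℝ) * (1 - τ)) =
                  Real.exp (pds G S : ℝ) * Real.exp (-τ * (pds G S : ℝ)) := by
                rw [← Real.exp_add]; ring_nf
              rw [hsplit]
              refine mul_le_mul_of_nonneg_right ?_ (Real.exp_pos _).le
              linarith [Real.add_one_le_exp ((pds G S : ℝ))]
      calc ∑ S ∈ pcand G (Fintype.card V) u',
            ∑ γ' ∈ (C.filter (fun γ' => u' ∈ γ'.1)).filter (fun γ' => γ'.1 = S),
              ((G.edgeFinset.filter (fun e => ∃ v ∈ γ'.1, v ∈ e)).card : ℝ) * w γ'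
          ≤ ∑ S ∈ pcand G (Fintype.card V) u', r ^ S.card * z ^ pds G S :=
            Finset.sum_le_sum hinner
        _ ≤ (Real.exp 1 * r * z) ^ G.degree u' :=
            Zbound r z hr hz hc1 (Fintype.card V) u' hdu'
        _ ≤ (Real.exp 1 * r * z) ^ 1 := pow_le_pow_of_le_one hc0 hc1 hdu'
        _ = Real.exp 1 * r * z := pow_one _
    -- covering step
    have hcov : ∀ γ' ∈ C.filter (fun γ' => ∃ u ∈ γ.1, ∃ u' ∈ γ'.1, u = u' ∨ G.Adj u u'),
        ∃ u' ∈ B, u' ∈ γ'.1 := by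
      intro γ' hγ'
      rw [Finset.mem_filter] at hγ'
      obtain ⟨_, u, huA, u'', hu'', hor⟩ := hγ'
      refine ⟨u'', ?_, hu''⟩
      rw [hBdef, Finset.mem_biUnion]
      refine ⟨u, huA, ?_⟩
      rcases hor with h | h
      · exact h ▸ Finset.mem_insert_self u _
      · exact Finset.mem_insert_of_mem ((G.mem_neighborFinset u u'').2 h)
    have hf : ∀ γ' ∈ C.filter (fun γ' => ∃ u ∈ γ.1, ∃ u' ∈ γ'.1, u = u' ∨ G.Adj u u'),
        0 ≤ ((G.edgeFinset.filter (fun e => ∃ v ∈ γ'.1, v ∈ e)).card : ℝ) * w γ' := by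
      intro γ' hγ'
      rw [Finset.mem_filter] at hγ'
      have := hw0 γ' hγ'.1
      positivity
    -- cardinality of the ball
    have hBcard : (B.card : ℝ) ≤
        4 * ((G.edgeFinset.filter (fun e => ∃ v ∈ γ.1, v ∈ e)).card : ℝ) := by
      have h1 : B.card ≤ ∑ u ∈ γ.1, (insert u (G.neighborFinset u)).card :=
        Finset.card_biUnion_le
      have h2 : ∑ u ∈ γ.1, (insert u (G.neighborFinset u)).card ≤
          ∑ u ∈ γ.1, (1 + G.degree u) := by
        refine Finset.sum_le_sum (fun u _ => ?_)
        calc (insert u (G.neighborFinset u)).card ≤ (G.neighborFinset u).card + 1 :=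
            Finset.card_insert_le _ _
          _ = 1 + G.degree u := by rw [G.card_neighborFinset_eq_degree]; omega
      have h3 : ∑ u ∈ γ.1, (1 + G.degree u) = γ.1.card + pds G γ.1 := by
        rw [Finset.sum_add_distrib, Finset.sum_const, smul_eq_mul, mul_one, pds]
      have h4 : γ.1.card ≤ pds G γ.1 := by
        rw [Finset.card_eq_sum_ones, pds]
        exact Finset.sum_le_sum hdeg
      have h5 : pds G γ.1 ≤ 2 * (G.edgeFinset.filter (fun e => ∃ v ∈ γ.1, v ∈ e)).card :=
        pds_le_two_edge γ.1
      have : B.card ≤ 4 * (G.edgeFinset.filter (fun e => ∃ v ∈ γ.1, v ∈ e)).card := by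
        omega
      exact_mod_cast this
    -- final chain
    calc ∑ γ' ∈ C.filter (fun γ' => ∃ u ∈ γ.1, ∃ u' ∈ γ'.1, u = u' ∨ G.Adj u u'),
          ((G.edgeFinset.filter (fun e => ∃ v ∈ γ'.1, v ∈ e)).card : ℝ) * w γ'
        ≤ ∑ u' ∈ B, ∑ γ' ∈ (C.filter
            (fun γ' => ∃ u ∈ γ.1, ∃ u' ∈ γ'.1, u = u' ∨ G.Adj u u')).filter
            (fun γ' => u' ∈ γ'.1),
            ((G.edgeFinset.filter (fun e => ∃ v ∈ γ'.1, v ∈ e)).card : ℝ) * w γ' := by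
          have h := sum_le_cover
            (C.filter (fun γ' => ∃ u ∈ γ.1, ∃ u' ∈ γ'.1, u = u' ∨ G.Adj u u'))
            B (fun u' γ' => u' ∈ γ'.1)
            (fun γ' => ((G.edgeFinset.filter (fun e => ∃ v ∈ γ'.1, v ∈ e)).card : ℝ) * w γ')
            hf hcov
          convert h using 3 with u' hu'
          exact Finset.filter_congr_decidable _ _ _ |>.symm
      _ ≤ ∑ _u' ∈ B, Real.exp 1 * r * z := by
          refine Finset.sum_le_sum (fun u' hu' => ?_)
          refine le_trans ?_ (hper u' (hBdeg u' hu'))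
          refine Finset.sum_le_sum_of_subset_of_nonneg ?_ ?_
          · intro x hx
            rw [Finset.mem_filter, Finset.mem_filter] at hx
            exact Finset.mem_filter.2 ⟨hx.1.1, hx.2⟩
          · intro γ' hγ' _
            rw [Finset.mem_filter] at hγ'
            have := hw0 γ' hγ'.1
            positivity
      _ = (B.card : ℝ) * (Real.exp 1 * r * z) := by rw [Finset.sum_const, nsmul_eq_mul]
      _ ≤ (4 * ((G.edgeFinset.filter (fun e => ∃ v ∈ γ.1, v ∈ e)).card : ℝ)) *
            (Real.exp 1 * r * z) := mul_le_mul_of_nonneg_right hBcard hc0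
      _ ≤ (4 * ((G.edgeFinset.filter (fun e => ∃ v ∈ γ.1, v ∈ e)).card : ℝ)) *
            (1 / (4 * Real.exp 1)) := by
          refine mul_le_mul_of_nonneg_left hcquarter (by positivity)
      _ = (1 / Real.exp 1) *
            ((G.edgeFinset.filter (fun e => ∃ v ∈ γ.1, v ∈ e)).card : ℝ) := by
          have hne : Real.exp 1 ≠ 0 := (Real.exp_pos 1).ne'
          field_simp
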